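/- For every real c > 0 there exists a real c₀ > 0 such that the following holds. Let λ₁, λ₂, λ₃ be real numbers with λ₁λ₂+λ₁λ₃+λ₂λ₃ = 0, H = λ₁+λ₂+λ₃ > 0 and −λ₁λ₂λ₃ ≥ c·H³. Let h : {1,2,3}³ → ℝ be fully symmetric (h_{ijk} is invariant under all permutations of the indices i, j, k) and satisfy, for each k ∈ {1,2,3}, the relation Σᵢ h_{iik}·(H − λᵢ) = 0. Then Σ_{i,j,k} h_{ijk}² − Σ_k (Σᵢ h_{iik})² ≥ (2/(1 + 2c₀²))·Σ_k (Σᵢ h_{iik})². (This is the pointwise content of the inequality |∇A|² − |∇H|² ≥ (2/(1+2c₀²))|∇H|² for zero scalar curvature hypersurfaces of ℝ⁴ with (−K)/H³ ≥ c.) -/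

import Mathlib

set_option maxHeartbeats 1000000 in
lemma perk (H t ν σ x y z ε : ℝ) (ht : 0 < t) (hν : 0 < ν) (hσ : 0 < σ) (hH : 0 < H)
    (hsum : t + ν + σ = 2*H) (hpair : t*ν + t*σ + ν*σ = H^2)
    (hL : t*x + ν*y + σ*z = 0)
    (hε0 : 0 ≤ ε) (hε : ε * (3*t^2 - 4*t*H + 3*H^2) ≤ 4*t*H) :
    (1+ε) * (x+y+z)^2 ≤ x^2 + 3*y^2 + 3*z^2 := by
  have hD : 0 < 3*t^2 - 4*t*H + 3*H^2 := by nlinarith [sq_nonneg (t-H), sq_nonneg t, sq_nonneg H]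
  have hδ2 : (ν-σ)^2 = t*(4*H-3*t) := by nlinarith [hsum, hpair, sq_nonneg (ν-σ)]
  have hG : (ν-σ)*(y-z) + 2*t*x + (2*H-t)*(y+z) = 0 := by
    linear_combination 2*hL - (y+z)*hsum
  have hcore : 3*(t^2+H^2)*(x+y+z)^2 ≤ (3*t^2-4*t*H+3*H^2) * (x^2+3*y^2+3*z^2) := by
    rcases eq_or_ne (ν - σ) 0 with h0 | h0
    · have h4 : t*(4*H-3*t) = 0 := by rw [← hδ2, h0]; ring
      have h3t : t = 4*H/3 := by
        rcases mul_eq_zero.1 h4 with h | h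
        · exact absurd h (ne_of_gt ht)
        · linarith
      have hνv : ν = H/3 := by linarith [sub_eq_zero.1 h0]
      have hσv : σ = H/3 := by linarith [sub_eq_zero.1 h0]
      have hy : y = -4*x - z := by
        have h1 : H*(4*x + (y+z)) = 0 := by
          rw [h3t, hνv, hσv] at hL; linear_combination 3*hL
        rcases mul_eq_zero.1 h1 with h | h
        · exact absurd h (ne_of_gt hH)
        · linarith
      subst h3t hy
      nlinarith [mul_nonneg (mul_pos hH hH).le (sq_nonneg (2*x+z))]
    · have h2 : 0 < (ν-σ)^2 := by positivity
      have key : (ν-σ)^2 * ((3*t^2-4*t*H+3*H^2)*(x^2+3*y^2+3*z^2) - 3*(t^2+H^2)*(x+y+z)^2)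
          = 2*(t*(3*t-H)*x + 3*H*(t-H)*(y+z))^2 := by
        linear_combination ((3*t^2-4*t*H+3*H^2)*x^2 + (3/2)*(3*t^2-4*t*H+3*H^2)*(y+z)^2
            - 3*(t^2+H^2)*(x+(y+z))^2) * hδ2
          + ((3/2)*(3*t^2-4*t*H+3*H^2)*((ν-σ)*(y-z) - 2*t*x - (2*H-t)*(y+z))) * hG
      nlinarith [sq_nonneg (t*(3*t-H)*x + 3*H*(t-H)*(y+z)), key, h2]
  nlinarith [hcore, mul_nonneg (sub_nonneg.2 hε) (sq_nonneg (x+y+z)), hD]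

/-- each `H - λᵢ` is positive -/
lemma mupos (c a b d : ℝ) (hc : 0 < c) (hH : 0 < a+b+d)
    (hR : a*b+a*d+b*d = 0) (hK : c*(a+b+d)^3 ≤ -(a*b*d)) : 0 < (a+b+d) - a := by
  by_contra h'
  push_neg at h'
  -- set H := a+b+d; μ₀ = b+d ≤ 0
  have e2 : ((a+b+d)-a)*((a+b+d)-b) + ((a+b+d)-a)*((a+b+d)-d) + ((a+b+d)-b)*((a+b+d)-d)
      = (a+b+d)^2 := by linear_combination hR
  have e3 : ((a+b+d)-a)*(((a+b+d)-b)*((a+b+d)-d)) = -(a*b*d) := by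
    linear_combination (a+b+d)*hR
  have hq : (a+b+d)^2 ≤ ((a+b+d)-b)*((a+b+d)-d) := by
    nlinarith [mul_nonneg (neg_nonneg.2 h') (by linarith : (0:ℝ) ≤ 2*(a+b+d) - ((a+b+d)-a))]
  have hK3 : 0 < c*(a+b+d)^3 := by positivity
  nlinarith [mul_nonneg (neg_nonneg.2 h') (le_trans (sq_nonneg (a+b+d)) hq)]

/-- `H - λₐ ≥ c·H` -/
lemma mulb (c a b d : ℝ) (hc : 0 < c) (hH : 0 < a+b+d)
    (hR : a*b+a*d+b*d = 0) (hK : c*(a+b+d)^3 ≤ -(a*b*d))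
    (h1 : 0 < (a+b+d) - a) (h2 : 0 < (a+b+d) - b) (h3 : 0 < (a+b+d) - d) :
    c*(a+b+d) ≤ (a+b+d) - a := by
  have e3 : ((a+b+d)-a)*(((a+b+d)-b)*((a+b+d)-d)) = -(a*b*d) := by
    linear_combination (a+b+d)*hR
  have e2 : ((a+b+d)-a)*((a+b+d)-b) + ((a+b+d)-a)*((a+b+d)-d) + ((a+b+d)-b)*((a+b+d)-d)
      = (a+b+d)^2 := by linear_combination hR
  have hbd : ((a+b+d)-b)*((a+b+d)-d) ≤ (a+b+d)^2 := by
    nlinarith [mul_pos h1 (by linarith : (0:ℝ) < 2*(a+b+d) - ((a+b+d)-a))]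
  -- μ₀ * (μ₁μ₂) ≥ cH³ and μ₁μ₂ ≤ H² → μ₀ H² ≥ cH³
  nlinarith [mul_pos hH hH, mul_le_mul_of_nonneg_left hbd h1.le, hK, e3]

/-- the epsilon bound at each `t ∈ [cH, 2H)` -/
lemma epsk (c H t ε : ℝ) (hc : 0 < c) (hH : 0 < H) (h1 : c*H ≤ t) (h2 : t < 2*H)
    (hε0 : 0 ≤ ε) (hA : ε * (3*c^2-4*c+3) ≤ 4*c) (hB : 7*ε ≤ 8) :
    ε * (3*t^2 - 4*t*H + 3*H^2) ≤ 4*t*H := by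
  have hc2 : c < 2 := by nlinarith
  have hp : 0 < (2-c)*H := mul_pos (by linarith) hH
  have P1 : 0 ≤ (2*H - t) * (H^2 * (4*c - ε*(3*c^2-4*c+3))) := by
    apply mul_nonneg (by linarith)
    apply mul_nonneg (sq_nonneg H) (by linarith)
  have P2 : 0 ≤ (t - c*H) * (H^2 * (8 - 7*ε)) := by
    apply mul_nonneg (by linarith)
    apply mul_nonneg (sq_nonneg H) (by linarith)
  have P3 : 0 ≤ ((2-c)*H) * (ε * ((t - c*H)*(2*H - t))) := by
    apply mul_nonneg hp.le
    apply mul_nonneg hε0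
    apply mul_nonneg (by linarith) (by linarith)
  nlinarith [P1, P2, P3, hp]

set_option maxHeartbeats 4000000 in
/-- Pointwise content of `|∇A|² − |∇H|² ≥ (2/(1+2c₀²))·|∇H|²` for zero scalar
curvature hypersurfaces of `ℝ⁴` with `(−K)/H³ ≥ c`. -/
theorem nabla_A_minus_nabla_H_bound :
    ∀ c : ℝ, 0 < c → ∃ c₀ : ℝ, 0 < c₀ ∧
      ∀ l : Fin 3 → ℝ,
        l 0 * l 1 + l 0 * l 2 + l 1 * l 2 = 0 →
        0 < l 0 + l 1 + l 2 →
        c * (l 0 + l 1 + l 2) ^ 3 ≤ -(l 0 * l 1 * l 2) →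
        ∀ h : Fin 3 → Fin 3 → Fin 3 → ℝ,
          (∀ i j k : Fin 3, h i j k = h j i k ∧ h i j k = h i k j) →
          (∀ k : Fin 3, ∑ i : Fin 3, h i i k * ((l 0 + l 1 + l 2) - l i) = 0) →
          (2 / (1 + 2 * c₀ ^ 2)) * ∑ k : Fin 3, (∑ i : Fin 3, h i i k) ^ 2 ≤
            (∑ i : Fin 3, ∑ j : Fin 3, ∑ k : Fin 3, h i j k ^ 2) -
              ∑ k : Fin 3, (∑ i : Fin 3, h i i k) ^ 2 := by
  intro c hc
  have hden : 0 < 3*c^2-4*c+3 := by nlinarith [sq_nonneg (3*c-2)]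
  set ε : ℝ := min (4*c/(3*c^2-4*c+3)) (8/7) with hεdef
  have hε0 : 0 < ε := lt_min (by positivity) (by norm_num)
  have hε87 : ε ≤ 8/7 := min_le_right _ _
  have hεA : ε * (3*c^2-4*c+3) ≤ 4*c := by
    have := min_le_left (4*c/(3*c^2-4*c+3)) (8/7)
    calc ε * (3*c^2-4*c+3) ≤ (4*c/(3*c^2-4*c+3)) * (3*c^2-4*c+3) :=
          mul_le_mul_of_nonneg_right this hden.le
      _ = 4*c := by rw [div_mul_cancel₀ _ hden.ne']
  have hε2 : ε < 2 := lt_of_le_of_lt hε87 (by norm_num)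
  have hpos : 0 < (2/ε - 1)/2 := by
    have : 1 < 2/ε := (one_lt_div hε0).2 hε2
    linarith
  refine ⟨Real.sqrt ((2/ε - 1)/2), Real.sqrt_pos.2 hpos, ?_⟩
  have hcoef : 2 / (1 + 2 * (Real.sqrt ((2/ε - 1)/2)) ^ 2) = ε := by
    rw [Real.sq_sqrt hpos.le]
    have h1 : 1 + 2 * ((2/ε - 1)/2) = 2/ε := by ring
    rw [h1]
    rw [div_div_eq_mul_div, mul_div_assoc]
    field_simp
  intro l hR hH hK h hsym hrel
  set H : ℝ := l 0 + l 1 + l 2 with hHdef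
  -- positivity of μ i = H - l i
  have m0 : 0 < H - l 0 := mupos c (l 0) (l 1) (l 2) hc hH hR hK
  have m1 : 0 < H - l 1 := by
    have := mupos c (l 1) (l 0) (l 2) hc (by rw [hHdef] at hH; linarith)
      (by linarith [hR]) (by rw [hHdef] at hK; nlinarith [hK])
    rw [hHdef]; linarith
  have m2 : 0 < H - l 2 := by
    have := mupos c (l 2) (l 0) (l 1) hc (by rw [hHdef] at hH; linarith)
      (by linarith [hR]) (by rw [hHdef] at hK; nlinarith [hK])
    rw [hHdef]; linarith
  have hH' : 0 < H := hH
  -- lower bounds c*H ≤ μ k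
  have b0 : c*H ≤ H - l 0 := mulb c (l 0) (l 1) (l 2) hc hH hR hK m0 m1 m2
  have b1 : c*H ≤ H - l 1 := by
    have := mulb c (l 1) (l 0) (l 2) hc (by rw [hHdef] at hH; linarith)
      (by linarith [hR]) (by rw [hHdef] at hK; nlinarith [hK]) (by rw [hHdef] at m1; linarith)
      (by rw [hHdef] at m0; linarith) (by rw [hHdef] at m2; linarith)
    rw [hHdef]; linarith
  have b2 : c*H ≤ H - l 2 := by
    have := mulb c (l 2) (l 0) (l 1) hc (by rw [hHdef] at hH; linarith)
      (by linarith [hR]) (by rw [hHdef] at hK; nlinarith [hK]) (by rw [hHdef] at m2; linarith)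
      (by rw [hHdef] at m0; linarith) (by rw [hHdef] at m1; linarith)
    rw [hHdef]; linarith
  have hB : 7*ε ≤ 8 := by linarith
  -- epsilon bounds
  have e0 := epsk c H (H - l 0) ε hc hH' b0 (by rw [hHdef] at m1 m2 ⊢; linarith) hε0.le hεA hB
  have e1 := epsk c H (H - l 1) ε hc hH' b1 (by rw [hHdef] at m0 m2 ⊢; linarith) hε0.le hεA hB
  have e2 := epsk c H (H - l 2) ε hc hH' b2 (by rw [hHdef] at m0 m1 ⊢; linarith) hε0.le hεA hB
  -- constraints
  have r0 := hrel 0; have r1 := hrel 1; have r2 := hrel 2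
  rw [Fin.sum_univ_three] at r0 r1 r2
  have L0 : (H - l 0) * h 0 0 0 + (H - l 1) * h 1 1 0 + (H - l 2) * h 2 2 0 = 0 := by
    linear_combination r0
  have L1 : (H - l 1) * h 1 1 1 + (H - l 0) * h 0 0 1 + (H - l 2) * h 2 2 1 = 0 := by
    linear_combination r1
  have L2 : (H - l 2) * h 2 2 2 + (H - l 0) * h 0 0 2 + (H - l 1) * h 1 1 2 = 0 := by
    linear_combination r2
  have hsum0 : (H - l 0) + (H - l 1) + (H - l 2) = 2*H := by rw [hHdef]; ring
  have hsum1 : (H - l 1) + (H - l 0) + (H - l 2) = 2*H := by rw [hHdef]; ring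
  have hsum2 : (H - l 2) + (H - l 0) + (H - l 1) = 2*H := by rw [hHdef]; ring
  have hpair0 : (H - l 0)*(H - l 1) + (H - l 0)*(H - l 2) + (H - l 1)*(H - l 2) = H^2 := by
    rw [hHdef]; linear_combination hR
  have hpair1 : (H - l 1)*(H - l 0) + (H - l 1)*(H - l 2) + (H - l 0)*(H - l 2) = H^2 := by
    rw [hHdef]; linear_combination hR
  have hpair2 : (H - l 2)*(H - l 0) + (H - l 2)*(H - l 1) + (H - l 0)*(H - l 1) = H^2 := by
    rw [hHdef]; linear_combination hR
  have K0 := perk H (H - l 0) (H - l 1) (H - l 2) (h 0 0 0) (h 1 1 0) (h 2 2 0) ε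
    m0 m1 m2 hH' hsum0 hpair0 L0 hε0.le e0
  have K1 := perk H (H - l 1) (H - l 0) (H - l 2) (h 1 1 1) (h 0 0 1) (h 2 2 1) ε
    m1 m0 m2 hH' hsum1 hpair1 L1 hε0.le e1
  have K2 := perk H (H - l 2) (H - l 0) (H - l 1) (h 2 2 2) (h 0 0 2) (h 1 1 2) ε
    m2 m0 m1 hH' hsum2 hpair2 L2 hε0.le e2
  -- symmetry normalizations
  have E1 : h 1 0 0 = h 0 0 1 := by rw [(hsym 1 0 0).1, (hsym 0 1 0).2]
  have E2 : h 0 1 0 = h 0 0 1 := (hsym 0 1 0).2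
  have E3 : h 2 0 0 = h 0 0 2 := by rw [(hsym 2 0 0).1, (hsym 0 2 0).2]
  have E4 : h 0 2 0 = h 0 0 2 := (hsym 0 2 0).2
  have E5 : h 0 1 1 = h 1 1 0 := by rw [(hsym 0 1 1).1, (hsym 1 0 1).2]
  have E6 : h 1 0 1 = h 1 1 0 := (hsym 1 0 1).2
  have E7 : h 2 1 1 = h 1 1 2 := by rw [(hsym 2 1 1).1, (hsym 1 2 1).2]
  have E8 : h 1 2 1 = h 1 1 2 := (hsym 1 2 1).2
  have E9 : h 0 2 2 = h 2 2 0 := by rw [(hsym 0 2 2).1, (hsym 2 0 2).2]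
  have E10 : h 2 0 2 = h 2 2 0 := (hsym 2 0 2).2
  have E11 : h 1 2 2 = h 2 2 1 := by rw [(hsym 1 2 2).1, (hsym 2 1 2).2]
  have E12 : h 2 1 2 = h 2 2 1 := (hsym 2 1 2).2
  have E13 : h 0 2 1 = h 0 1 2 := (hsym 0 2 1).2
  have E14 : h 1 0 2 = h 0 1 2 := (hsym 1 0 2).1
  have E15 : h 1 2 0 = h 0 1 2 := by rw [(hsym 1 2 0).2, E14]
  have E16 : h 2 0 1 = h 0 1 2 := by rw [(hsym 2 0 1).1, E13]
  have E17 : h 2 1 0 = h 0 1 2 := by rw [(hsym 2 1 0).1, E15]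
  rw [hcoef]
  simp only [Fin.sum_univ_three]
  simp only [E1, E2, E3, E4, E5, E6, E7, E8, E9, E10, E11, E12, E13, E14, E15, E16, E17]
  linarith [K0, K1, K2, sq_nonneg (h 0 1 2)]
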